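/- Let $\{m_n\}_{n\ge 0}$ be a non-decreasing sequence of positive integers and $W_n \in \mathbb{R}^{m_n \times m_{n-1}}$ satisfy $W_n = I_{m_n,m_{n-1}} + P_n$ with $\sum_{n=1}^\infty \|P_n\|_p < +\infty$. Then the sequence $I_{\infty,m_n} \prod_{k=1}^n W_k$ converges in the operator norm of bounded linear operators from $\mathbb{R}^{m_0}$ to $\ell^p$. -/

import Mathlib

open scoped ENNReal
open Matrix Filter

noncomputable section


/-- The `m' × m` matrix with the identity on top and zero rows below. -/
def Ipad (m' m : ℕ) : Matrix (Fin m') (Fin m) ℝ :=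
  Matrix.of fun i j => if (i : ℕ) = (j : ℕ) then 1 else 0

/-- The diagonal entries of an activation matrix are 0 or 1. -/
def ZeroOne {m : ℕ} (J : Fin m → ℝ) : Prop := ∀ i, J i = 0 ∨ J i = 1

/-- A matrix viewed as a bounded linear operator between `ℓ^p` spaces `ℝ^a → ℝ^b`. -/
def matCLM (p : ℝ≥0∞) [Fact (1 ≤ p)] {a b : ℕ} (A : Matrix (Fin b) (Fin a) ℝ) :
    PiLp p (fun _ : Fin a => ℝ) →L[ℝ] PiLp p (fun _ : Fin b => ℝ) :=
  LinearMap.toContinuousLinearMap <|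
    (WithLp.linearEquiv p ℝ (Fin b → ℝ)).symm.toLinearMap ∘ₗ
      A.mulVecLin ∘ₗ (WithLp.linearEquiv p ℝ (Fin a → ℝ)).toLinearMap

/-- Zero-padding of a finite vector into `ℓ^p`. -/
def padLp (p : ℝ≥0∞) [Fact (1 ≤ p)] {m : ℕ} (x : Fin m → ℝ) : lp (fun _ : ℕ => ℝ) p :=
  ∑ i : Fin m, lp.single p (i : ℕ) (x i)

/-- Zero-padding as a bounded linear operator `ℝ^m → ℓ^p`. -/
def padCLM (p : ℝ≥0∞) [Fact (1 ≤ p)] (m : ℕ) :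
    PiLp p (fun _ : Fin m => ℝ) →L[ℝ] lp (fun _ : ℕ => ℝ) p :=
  LinearMap.toContinuousLinearMap
    { toFun := fun x => padLp p ((WithLp.linearEquiv p ℝ (Fin m → ℝ)) x)
      map_add' := by
        intro x y
        simp only [padLp, WithLp.linearEquiv_apply]
        rw [← Finset.sum_add_distrib]
        refine Finset.sum_congr rfl fun i _ => ?_
        apply lp.ext
        funext j
        by_cases h : j = (i : ℕ)
        · subst h
          simp [lp.single_apply_self]
        · simp [lp.single_apply_ne p _ _ h]
      map_smul' := by
        intro c x
        simp only [padLp, WithLp.linearEquiv_apply, RingHom.id_apply, Finset.smul_sum]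
        refine Finset.sum_congr rfl fun i _ => ?_
        rw [show (WithLp.addEquiv p (Fin m → ℝ)).toFun (c • x) i = c • (WithLp.addEquiv p (Fin m → ℝ)).toFun x i from rfl,
          lp.single_smul] }


/-- Componentwise ReLU. -/
def relu {m : ℕ} (x : Fin m → ℝ) : Fin m → ℝ := fun i => max (x i) 0

/-- The unit cube `[0,1]^d`. -/
def cube (d : ℕ) : Set (Fin d → ℝ) := {x | ∀ i, x i ∈ Set.Icc (0:ℝ) 1}

variable {m : ℕ → ℕ}

/-- The deep ReLU network `N_n(x) = σ(W_n · + b_n) ∘ ⋯ ∘ σ(W_1 · + b_1) (x)`. -/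
def net (W : ∀ n, Matrix (Fin (m (n+1))) (Fin (m n)) ℝ) (b : ∀ n, Fin (m (n+1)) → ℝ)
    (x : Fin (m 0) → ℝ) : ∀ n, Fin (m n) → ℝ
  | 0 => x
  | n+1 => relu (W n *ᵥ net W b x n + b n)

/-- The product `J_n W_n ⋯ J_1 W_1`. -/
def prodJW (W : ∀ n, Matrix (Fin (m (n+1))) (Fin (m n)) ℝ)
    (J : ∀ n, Fin (m (n+1)) → ℝ) : ∀ n, Matrix (Fin (m n)) (Fin (m 0)) ℝ
  | 0 => 1
  | n+1 => (Matrix.diagonal (J n) * W n) * prodJW W J n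

/-- The product `J_{i+t} W_{i+t} ⋯ J_{i+1} W_{i+1}` (product of `t` factors starting at layer `i+1`). -/
def prodJWFrom (W : ∀ n, Matrix (Fin (m (n+1))) (Fin (m n)) ℝ)
    (J : ∀ n, Fin (m (n+1)) → ℝ) (i : ℕ) : ∀ t, Matrix (Fin (m (i+t))) (Fin (m i)) ℝ
  | 0 => (1 : Matrix (Fin (m i)) (Fin (m i)) ℝ)
  | t+1 => (Matrix.diagonal (J (i+t)) * W (i+t)) * prodJWFrom W J i t

/-- `∑_{i=1}^n (∏_{k=i+1}^n J_k W_k) J_i b_i`, defined by the recursion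
`c_0 = 0`, `c_{n+1} = J_{n+1} W_{n+1} c_n + J_{n+1} b_{n+1}`. -/
def biasSum (W : ∀ n, Matrix (Fin (m (n+1))) (Fin (m n)) ℝ)
    (J : ∀ n, Fin (m (n+1)) → ℝ) (b : ∀ n, Fin (m (n+1)) → ℝ) : ∀ n, Fin (m n) → ℝ
  | 0 => 0
  | n+1 => (Matrix.diagonal (J n) * W n) *ᵥ biasSum W J b n + Matrix.diagonal (J n) *ᵥ b n

/-- Activation domain of a one-layer network. -/
def actDom {a c : ℕ} (J : Fin c → ℝ) (W : Matrix (Fin c) (Fin a) ℝ) (b : Fin c → ℝ) :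
    Set (Fin a → ℝ) :=
  {x | ∀ j, (J j = 1 → 0 < (W *ᵥ x + b) j) ∧ (J j ≠ 1 → (W *ᵥ x + b) j ≤ 0)}

/-- Activation domains of a multi-layer network. -/
def actDomMulti (W : ∀ n, Matrix (Fin (m (n+1))) (Fin (m n)) ℝ)
    (J : ∀ n, Fin (m (n+1)) → ℝ) (b : ∀ n, Fin (m (n+1)) → ℝ) : ℕ → Set (Fin (m 0) → ℝ)
  | 0 => cube (m 0)
  | n+1 => {x ∈ actDomMulti W J b n | net W b x n ∈ actDom (J n) (W n) (b n)}

/-- The Toeplitz matrix of a filter mask `w = (w_0, …, w_s)`. -/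
def toep (s mm : ℕ) (w : Fin (s+1) → ℝ) : Matrix (Fin (mm + s)) (Fin mm) ℝ :=
  Matrix.of fun i j =>
    if h : (j : ℕ) ≤ (i : ℕ) ∧ (i : ℕ) - (j : ℕ) ≤ s then w ⟨(i : ℕ) - (j : ℕ), by omega⟩ else 0

/-- The widths of a CNN: `m_0 = d`, `m_n = m_{n-1} + s_n`. -/
def cnnWidth (d : ℕ) (s : ℕ → ℕ) : ℕ → ℕ
  | 0 => d
  | n+1 => cnnWidth d s n + s n

/-- The CNN: layer `n+1` maps `x ↦ σ(x * w^{(n+1)} + b_{n+1})`. -/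
def cnnNet (d : ℕ) (s : ℕ → ℕ) (w : ∀ n, Fin (s n + 1) → ℝ)
    (b : ∀ n, Fin (cnnWidth d s (n+1)) → ℝ) (x : Fin d → ℝ) :
    ∀ n, Fin (cnnWidth d s n) → ℝ
  | 0 => x
  | n+1 => relu (fun i => (toep (s n) (cnnWidth d s n) (w n) *ᵥ cnnNet d s w b x n) i + b n i)

/-- The product `W_n W_{n-1} ⋯ W_1`. -/
def prodW {m : ℕ → ℕ} (W : ∀ n, Matrix (Fin (m (n+1))) (Fin (m n)) ℝ) :
    ∀ n, Matrix (Fin (m n)) (Fin (m 0)) ℝ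
  | 0 => (1 : Matrix (Fin (m 0)) (Fin (m 0)) ℝ)
  | n+1 => W n * prodW W n

section Helpers

lemma padLp_apply (p : ℝ≥0∞) [Fact (1 ≤ p)] {m : ℕ} (x : Fin m → ℝ) (j : ℕ) :
    (padLp p x : ∀ _ : ℕ, ℝ) j = if h : j < m then x ⟨j, h⟩ else 0 := by
  have h0 : (padLp p x : ∀ _ : ℕ, ℝ) j
      = ∑ i : Fin m, (lp.single p (i : ℕ) (x i) : ∀ _ : ℕ, ℝ) j := by
    rw [padLp, lp.coeFn_sum, Finset.sum_apply]
  rw [h0]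
  split_ifs with h
  · rw [Finset.sum_eq_single (⟨j, h⟩ : Fin m)]
    · exact lp.single_apply_self ..
    · intro i _ hi
      exact lp.single_apply_ne p _ _ (fun hji => hi (Fin.ext hji.symm))
    · simp
  · refine Finset.sum_eq_zero fun i _ => ?_
    exact lp.single_apply_ne p _ _ (fun hj => h (hj ▸ i.isLt))

lemma padLp_norm (p : ℝ≥0∞) [Fact (1 ≤ p)] {m : ℕ} (hm : 0 < m)
    (x : PiLp p (fun _ : Fin m => ℝ)) :
    ‖padLp p ((WithLp.equiv p (Fin m → ℝ)) x)‖ = ‖x‖ := by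
  set x' : Fin m → ℝ := (WithLp.equiv p (Fin m → ℝ)) x with hx'
  have hx'i : ∀ i : Fin m, x' i = x i := fun _ => rfl
  by_cases hp : p = ∞
  · subst hp
    have key : ∀ j : ℕ, (padLp ∞ x' : ∀ _ : ℕ, ℝ) j
        = if h : j < m then x ⟨j, h⟩ else 0 := fun j => padLp_apply ∞ x' j
    rw [lp.norm_eq_ciSup, PiLp.norm_eq_ciSup]
    apply le_antisymm
    · refine ciSup_le fun j => ?_
      rw [key j]
      split_ifs with h
      · exact le_ciSup (f := fun i : Fin m => ‖x i‖)
          (Set.Finite.bddAbove (Set.finite_range _)) (⟨j, h⟩ : Fin m)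
      · simp only [norm_zero]
        exact Real.iSup_nonneg fun i : Fin m => norm_nonneg (x i)
    · have : Nonempty (Fin m) := ⟨⟨0, hm⟩⟩
      refine ciSup_le fun i => ?_
      have hb : BddAbove (Set.range fun j : ℕ => ‖(padLp ∞ x' : ∀ _ : ℕ, ℝ) j‖) := by
        refine ⟨max ‖x‖ 0 ⊔ 1, ?_⟩
        rintro r ⟨j, rfl⟩
        simp only [key j]
        split_ifs with h
        · calc ‖x ⟨j,h⟩‖ ≤ ⨆ i, ‖x i‖ :=
                le_ciSup (f := fun i : Fin m => ‖x i‖)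
                  (Set.Finite.bddAbove (Set.finite_range _)) ⟨j, h⟩
            _ ≤ _ := by
                rw [← PiLp.norm_eq_ciSup]; exact le_sup_of_le_left (le_max_left _ _)
        · simp
      have := le_ciSup hb (i : ℕ)
      rw [key (i : ℕ)] at this
      rw [dif_pos i.isLt] at this
      simpa using this
  · have ht : 0 < p.toReal := by
      refine ENNReal.toReal_pos ?_ hp
      have h1 : (1 : ℝ≥0∞) ≤ p := Fact.out
      intro h0; rw [h0] at h1; exact (by simp at h1)
    set t := p.toReal
    have htne : t ≠ 0 := ht.ne'
    set g : ∀ _ : ℕ, ℝ := fun j => if h : j < m then x' ⟨j, h⟩ else 0 with hg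
    have hpad : padLp p x' = ∑ j ∈ Finset.range m, lp.single p j (g j) := by
      rw [padLp, ← Fin.sum_univ_eq_sum_range (fun j => lp.single p j (g j)) m]
      refine Finset.sum_congr rfl fun i _ => ?_
      congr 1
      simp [hg, i.isLt]
    have h1 : ‖padLp p x'‖ ^ t = ∑ j ∈ Finset.range m, ‖g j‖ ^ t := by
      rw [hpad]; exact lp.norm_sum_single ht g _
    have h2 : ∑ j ∈ Finset.range m, ‖g j‖ ^ t = ∑ i : Fin m, ‖x i‖ ^ t := by
      rw [← Fin.sum_univ_eq_sum_range (fun j => ‖g j‖ ^ t) m]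
      refine Finset.sum_congr rfl fun i _ => ?_
      simp [hg, i.isLt, hx'i]
    have h3 : ‖x‖ ^ t = ∑ i : Fin m, ‖x i‖ ^ t := by
      rw [PiLp.norm_eq_sum ht, one_div, Real.rpow_inv_rpow (by positivity) htne]
    have h4 : ‖padLp p x'‖ ^ t = ‖x‖ ^ t := by rw [h1, h2, h3]
    calc ‖padLp p x'‖ = (‖padLp p x'‖ ^ t) ^ t⁻¹ :=
          (Real.rpow_rpow_inv (norm_nonneg _) htne).symm
      _ = (‖x‖ ^ t) ^ t⁻¹ := by rw [h4]
      _ = ‖x‖ := Real.rpow_rpow_inv (norm_nonneg _) htne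

variable (p : ℝ≥0∞) [Fact (1 ≤ p)]

lemma matCLM_apply {a b : ℕ} (A : Matrix (Fin b) (Fin a) ℝ) (x : PiLp p (fun _ : Fin a => ℝ)) :
    matCLM p A x = (WithLp.equiv p (Fin b → ℝ)).symm (A *ᵥ (WithLp.equiv p (Fin a → ℝ)) x) := rfl

lemma matCLM_mul {a b c : ℕ} (A : Matrix (Fin c) (Fin b) ℝ) (B : Matrix (Fin b) (Fin a) ℝ) :
    matCLM p (A * B) = (matCLM p A).comp (matCLM p B) := by
  refine ContinuousLinearMap.ext fun x => ?_
  simp only [ContinuousLinearMap.comp_apply, matCLM_apply, Equiv.apply_symm_apply]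
  rw [← Matrix.mulVec_mulVec]

lemma matCLM_add {a b : ℕ} (A B : Matrix (Fin b) (Fin a) ℝ) :
    matCLM p (A + B) = matCLM p A + matCLM p B := by
  refine ContinuousLinearMap.ext fun x => ?_
  simp only [ContinuousLinearMap.add_apply, matCLM_apply, Matrix.add_mulVec]
  rfl

lemma matCLM_one {a : ℕ} : matCLM p (1 : Matrix (Fin a) (Fin a) ℝ) = ContinuousLinearMap.id ℝ _ := by
  refine ContinuousLinearMap.ext fun x => ?_
  simp only [matCLM_apply, Matrix.one_mulVec]
  rfl

lemma padCLM_apply (m : ℕ) (x : PiLp p (fun _ : Fin m => ℝ)) :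
    padCLM p m x = padLp p ((WithLp.equiv p (Fin m → ℝ)) x) := rfl

lemma padCLM_norm_apply {m : ℕ} (hm : 0 < m) (x : PiLp p (fun _ : Fin m => ℝ)) :
    ‖padCLM p m x‖ = ‖x‖ := padLp_norm p hm x

lemma padCLM_norm_le {m : ℕ} (hm : 0 < m) : ‖padCLM p m‖ ≤ 1 :=
  ContinuousLinearMap.opNorm_le_bound _ zero_le_one fun x => by
    rw [padCLM_norm_apply p hm, one_mul]

lemma matCLM_norm_le_pad {a b : ℕ} (hb : 0 < b) (A : Matrix (Fin b) (Fin a) ℝ) :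
    ‖matCLM p A‖ ≤ ‖(padCLM p b).comp (matCLM p A)‖ := by
  refine ContinuousLinearMap.opNorm_le_bound _ (norm_nonneg _) fun x => ?_
  rw [← padCLM_norm_apply p hb (matCLM p A x)]
  exact ((padCLM p b).comp (matCLM p A)).le_opNorm x

lemma Ipad_mulVec {m' m : ℕ} (v : Fin m → ℝ) (i : Fin m') :
    (Ipad m' m *ᵥ v) i = if h : (i : ℕ) < m then v ⟨i, h⟩ else 0 := by
  show ∑ j, Ipad m' m i j * v j = _
  split_ifs with h
  · rw [Finset.sum_eq_single (⟨(i : ℕ), h⟩ : Fin m)]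
    · simp [Ipad]
    · intro j _ hj
      simp only [Ipad, Matrix.of_apply]
      rw [if_neg (fun hij => hj (Fin.ext hij.symm)), zero_mul]
    · simp
  · refine Finset.sum_eq_zero fun j _ => ?_
    simp only [Ipad, Matrix.of_apply]
    rw [if_neg (fun hij : (i:ℕ) = (j:ℕ) => h (hij ▸ j.isLt)), zero_mul]

lemma pad_Ipad {b c : ℕ} (hbc : b ≤ c) :
    (padCLM p c).comp (matCLM p (Ipad c b)) = padCLM p b := by
  refine ContinuousLinearMap.ext fun x => ?_
  simp only [ContinuousLinearMap.comp_apply, padCLM_apply, matCLM_apply,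
    Equiv.apply_symm_apply]
  apply lp.ext
  funext j
  rw [padLp_apply, padLp_apply]
  by_cases hb : j < b
  · have hc : j < c := lt_of_lt_of_le hb hbc
    rw [dif_pos hc, dif_pos hb, Ipad_mulVec]
    simp [hb]
  · by_cases hc : j < c
    · rw [dif_pos hc, dif_neg hb, Ipad_mulVec]
      simp [hb]
    · rw [dif_neg hc, dif_neg hb]

end Helpers

theorem stmt5 (p : ℝ≥0∞) [Fact (1 ≤ p)] (m : ℕ → ℕ) (hpos : ∀ n, 0 < m n)
    (hmono : ∀ n, m n ≤ m (n+1))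
    (W P : ∀ n, Matrix (Fin (m (n+1))) (Fin (m n)) ℝ)
    (hW : ∀ n, W n = Ipad (m (n+1)) (m n) + P n)
    (hP : Summable fun n => ‖matCLM p (P n)‖) :
    ∃ L : PiLp p (fun _ : Fin (m 0) => ℝ) →L[ℝ] lp (fun _ : ℕ => ℝ) p,
      Tendsto (fun n => (padCLM p (m n)).comp (matCLM p (prodW W n)))
        atTop (nhds L) := by
  classical
  set a : ℕ → ℝ := fun n => ‖matCLM p (P n)‖ with ha
  have ha0 : ∀ n, 0 ≤ a n := fun n => norm_nonneg _
  set C : ℝ := Real.exp (∑' n, a n) with hC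
  have hCpos : 0 < C := Real.exp_pos _
  have hprod : ∀ n, ‖matCLM p (prodW W n)‖ ≤ Real.exp (∑ k ∈ Finset.range n, a k) := by
    intro n
    induction n with
    | zero =>
      rw [show prodW W 0 = 1 from rfl, matCLM_one]
      simpa using (ContinuousLinearMap.norm_id_le :
        ‖ContinuousLinearMap.id ℝ (PiLp p (fun _ : Fin (m 0) => ℝ))‖ ≤ 1)
    | succ n ih =>
      have hWn : ‖matCLM p (W n)‖ ≤ 1 + a n := by
        calc ‖matCLM p (W n)‖ ≤ ‖(padCLM p (m (n+1))).comp (matCLM p (W n))‖ :=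
              matCLM_norm_le_pad p (hpos _) _
          _ = ‖(padCLM p (m n)) + (padCLM p (m (n+1))).comp (matCLM p (P n))‖ := by
              rw [hW n, matCLM_add, ContinuousLinearMap.comp_add, pad_Ipad p (hmono n)]
          _ ≤ ‖padCLM p (m n)‖ + ‖(padCLM p (m (n+1))).comp (matCLM p (P n))‖ :=
              norm_add_le _ _
          _ ≤ 1 + a n := by
              refine add_le_add (padCLM_norm_le p (hpos n)) ?_
              calc ‖(padCLM p (m (n+1))).comp (matCLM p (P n))‖
                  ≤ ‖padCLM p (m (n+1))‖ * ‖matCLM p (P n)‖ :=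
                    ContinuousLinearMap.opNorm_comp_le _ _
                _ ≤ 1 * a n :=
                    mul_le_mul_of_nonneg_right (padCLM_norm_le p (hpos _)) (ha0 n)
                _ = a n := one_mul _
      calc ‖matCLM p (prodW W (n+1))‖
          = ‖(matCLM p (W n)).comp (matCLM p (prodW W n))‖ := by
            rw [show prodW W (n+1) = W n * prodW W n from rfl, matCLM_mul]
        _ ≤ ‖matCLM p (W n)‖ * ‖matCLM p (prodW W n)‖ :=
            ContinuousLinearMap.opNorm_comp_le _ _
        _ ≤ (1 + a n) * Real.exp (∑ k ∈ Finset.range n, a k) :=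
            mul_le_mul hWn ih (norm_nonneg _) (by positivity)
        _ ≤ Real.exp (a n) * Real.exp (∑ k ∈ Finset.range n, a k) := by
            have := Real.add_one_le_exp (a n)
            have he : (0:ℝ) ≤ Real.exp (∑ k ∈ Finset.range n, a k) := (Real.exp_pos _).le
            nlinarith
        _ = Real.exp (∑ k ∈ Finset.range (n+1), a k) := by
            rw [← Real.exp_add, add_comm, Finset.sum_range_succ]
  have hprodC : ∀ n, ‖matCLM p (prodW W n)‖ ≤ C := by
    intro n
    refine (hprod n).trans (Real.exp_le_exp.mpr ?_)
    exact Summable.sum_le_tsum (Finset.range n) (fun i _ => ha0 i) hP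
  set T : ℕ → (PiLp p (fun _ : Fin (m 0) => ℝ) →L[ℝ] lp (fun _ : ℕ => ℝ) p) :=
    fun n => (padCLM p (m n)).comp (matCLM p (prodW W n)) with hT
  have hTdiff : ∀ n, T (n+1) - T n
      = (padCLM p (m (n+1))).comp ((matCLM p (P n)).comp (matCLM p (prodW W n))) := by
    intro n
    have hstep : T (n+1) = T n
        + (padCLM p (m (n+1))).comp ((matCLM p (P n)).comp (matCLM p (prodW W n))) := by
      show (padCLM p (m (n+1))).comp (matCLM p (prodW W (n+1))) = _
      rw [show prodW W (n+1) = W n * prodW W n from rfl, matCLM_mul, hW n, matCLM_add,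
        ContinuousLinearMap.add_comp, ContinuousLinearMap.comp_add,
        ← ContinuousLinearMap.comp_assoc, pad_Ipad p (hmono n)]
    rw [hstep]; abel
  have hd : ∀ n, ‖T (n+1) - T n‖ ≤ C * a n := by
    intro n
    rw [hTdiff n]
    calc ‖(padCLM p (m (n+1))).comp ((matCLM p (P n)).comp (matCLM p (prodW W n)))‖
        ≤ ‖padCLM p (m (n+1))‖ * ‖(matCLM p (P n)).comp (matCLM p (prodW W n))‖ :=
          ContinuousLinearMap.opNorm_comp_le _ _
      _ ≤ 1 * (‖matCLM p (P n)‖ * ‖matCLM p (prodW W n)‖) :=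
          mul_le_mul (padCLM_norm_le p (hpos _)) (ContinuousLinearMap.opNorm_comp_le _ _)
            (norm_nonneg _) zero_le_one
      _ ≤ 1 * (a n * C) := by
          rw [one_mul, one_mul]
          exact mul_le_mul_of_nonneg_left (hprodC n) (ha0 n)
      _ = C * a n := by ring
  have hsum : Summable fun n => T (n+1) - T n :=
    Summable.of_norm_bounded (hP.mul_left C) hd
  obtain ⟨S, hS⟩ := hsum
  refine ⟨T 0 + S, ?_⟩
  have h2 : Tendsto (fun n => T 0 + ∑ i ∈ Finset.range n, (T (i+1) - T i)) atTop
      (nhds (T 0 + S)) := tendsto_const_nhds.add hS.tendsto_sum_nat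
  have h3 : (fun n => T 0 + ∑ i ∈ Finset.range n, (T (i+1) - T i)) = T := by
    funext n
    rw [Finset.sum_range_sub]
    abel
  rw [h3] at h2
  exact h2

end
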